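/- (Weighted matrix tree theorem) Let G_w be a finite directed graph with positive edge weights w_1,...,w_q, weighted Laplacian L_{1,w} = D_{in,w} - A_{v,w}, and a fixed root vertex v_r. Then det(L_{1,w}^r), where L_{1,w}^r deletes the r-th row and column, equals the sum over all outgoing directed spanning trees T rooted at v_r of the product of the weights of the edges of T. -/

import Mathlib

open Matrix

variable {p q : ℕ}

/-- In-incidence matrix: `[N_in]_{ki} = 1` iff edge `k` points to vertex `i`. -/
def Nin (tgt : Fin q → Fin p) : Matrix (Fin q) (Fin p) ℝ :=
  Matrix.of fun k i => if tgt k = i then (1 : ℝ) else 0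

/-- Out-incidence matrix: `[M_out]_{ik} = 1` iff edge `k` points from vertex `i`. -/
def Mout (src : Fin q → Fin p) : Matrix (Fin p) (Fin q) ℝ :=
  Matrix.of fun i k => if src k = i then (1 : ℝ) else 0

/-- Diagonal in-degree matrix. -/
def Din (tgt : Fin q → Fin p) : Matrix (Fin p) (Fin p) ℝ :=
  Matrix.diagonal fun i => (Fintype.card {k : Fin q // tgt k = i} : ℝ)

/-- Diagonal out-degree matrix. -/
def Dout (src : Fin q → Fin p) : Matrix (Fin p) (Fin p) ℝ :=
  Matrix.diagonal fun i => (Fintype.card {k : Fin q // src k = i} : ℝ)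

/-- Vertex-adjacency matrix: `[A_v]_{ij} = 1` iff there is an edge from `i` to `j`. -/
def Av (src tgt : Fin q → Fin p) : Matrix (Fin p) (Fin p) ℝ :=
  Matrix.of fun i j => if ∃ k, src k = i ∧ tgt k = j then (1 : ℝ) else 0

/-- `S` is the edge set of an outgoing directed spanning tree rooted at `r`:
every non-root vertex has in-degree `1` in `S`, the root has in-degree `0`,
and there are no directed cycles among the edges of `S`. -/
def IsOutTree (src tgt : Fin q → Fin p) (r : Fin p) (S : Finset (Fin q)) : Prop :=
  (∀ i, i ≠ r → ∃! k, k ∈ S ∧ tgt k = i) ∧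
  (∀ k ∈ S, tgt k ≠ r) ∧
  (∀ i, ¬ Relation.TransGen (fun a b => ∃ k ∈ S, src k = a ∧ tgt k = b) i i)

/-- `S` is the edge set of an incoming directed spanning tree rooted at `r`:
every non-root vertex has out-degree `1` in `S`, the root has out-degree `0`,
and there are no directed cycles among the edges of `S`. -/
def IsInTree (src tgt : Fin q → Fin p) (r : Fin p) (S : Finset (Fin q)) : Prop :=
  (∀ i, i ≠ r → ∃! k, k ∈ S ∧ src k = i) ∧
  (∀ k ∈ S, src k ≠ r) ∧
  (∀ i, ¬ Relation.TransGen (fun a b => ∃ k ∈ S, src k = a ∧ tgt k = b) i i)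

/-- Weighted vertex-adjacency matrix: `[A_{v,w}]_{ij} = w_k` if `e_k` goes from `i` to `j`. -/
def Avw (src tgt : Fin q → Fin p) (w : Fin q → ℝ) : Matrix (Fin p) (Fin p) ℝ :=
  Matrix.of fun i j => ∑ k, if src k = i ∧ tgt k = j then w k else 0

/-- Weighted diagonal in-degree matrix: sum of the weights of the edges into each vertex. -/
def Dinw (tgt : Fin q → Fin p) (w : Fin q → ℝ) : Matrix (Fin p) (Fin p) ℝ :=
  Matrix.diagonal fun i => ∑ k, if tgt k = i then w k else 0

/-- Weighted diagonal out-degree matrix: sum of the weights of the edges out of each vertex. -/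
def Doutw (src : Fin q → Fin p) (w : Fin q → ℝ) : Matrix (Fin p) (Fin p) ℝ :=
  Matrix.diagonal fun i => ∑ k, if src k = i then w k else 0


/-- If the nonzero entries of `P` descend along an acyclic relation, `det (1 - P) = 1`. -/
private lemma aux_det_one_sub_eq_one {n : Type*} [Fintype n] [DecidableEq n]
    (P : Matrix n n ℝ) (Q : n → n → Prop)
    (hP : ∀ j i, P j i ≠ 0 → Q i j)
    (hacyc : ∀ i, ¬ Relation.TransGen Q i i) :
    (1 - P).det = 1 := by
  classical
  set ρ : n → ℕ := fun a => (Finset.univ.filter fun b => Relation.TransGen Q a b).card with hρ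
  have hmono : ∀ a b, Q a b → ρ b < ρ a := by
    intro a b hab
    refine Finset.card_lt_card ⟨?_, ?_⟩
    · intro c hc
      simp only [Finset.mem_filter, Finset.mem_univ, true_and] at hc ⊢
      exact (Relation.TransGen.single hab).trans hc
    · intro hsub
      have hb : b ∈ Finset.univ.filter fun c => Relation.TransGen Q a c := by
        simp [Relation.TransGen.single hab]
      have := hsub hb
      simp only [Finset.mem_filter, Finset.mem_univ, true_and] at this
      exact hacyc b this
  have hbt : (1 - P).BlockTriangular ρ := by
    intro i j hij
    have hne : i ≠ j := fun h => by subst h; exact lt_irrefl _ hij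
    have hPij : P i j = 0 := by
      by_contra h
      exact absurd hij (lt_asymm (hmono j i (hP i j h)))
    simp [Matrix.sub_apply, Matrix.one_apply_ne hne, hPij]
  rw [hbt.det]
  refine Finset.prod_eq_one fun a _ => ?_
  have hblock : (1 - P).toSquareBlock ρ a = 1 := by
    ext x y
    rcases eq_or_ne x y with rfl | hxy
    · have hPxx : P (↑x) (↑x) = 0 := by
        by_contra h
        exact hacyc _ (Relation.TransGen.single (hP _ _ h))
      simp [Matrix.toSquareBlock_def, hPxx]
    · have hxy' : (x : n) ≠ (y : n) := fun h => hxy (Subtype.ext h)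
      have hPxy : P (↑x) (↑y) = 0 := by
        by_contra h
        have hlt := hmono _ _ (hP _ _ h)
        rw [x.2, y.2] at hlt
        exact lt_irrefl _ hlt
      simp [Matrix.toSquareBlock_def, Matrix.one_apply_ne hxy', hPxy,
        Matrix.one_apply_ne hxy]
  rw [hblock, Matrix.det_one]

/-- If `P` is the `0/1` matrix of a relation in which every element has at most one
"parent" and there is a cycle, then `det (1 - P) = 0`. -/
private lemma aux_det_one_sub_eq_zero {n : Type*} [Fintype n] [DecidableEq n]
    (P : Matrix n n ℝ) (Q : n → n → Prop)
    (hPQ1 : ∀ j i, Q i j → P j i = 1) (hPQ0 : ∀ j i, ¬ Q i j → P j i = 0)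
    (hfun : ∀ j i i', Q i j → Q i' j → i = i')
    {j₀ : n} (hcyc : Relation.TransGen Q j₀ j₀) :
    (1 - P).det = 0 := by
  classical
  set C : Finset n := Finset.univ.filter
    (fun a => Relation.TransGen Q a j₀ ∧ Relation.TransGen Q j₀ a) with hC
  have hj₀ : j₀ ∈ C := by simp [hC, hcyc]
  have hparent : ∀ a ∈ C, ∃ b ∈ C, Q b a := by
    intro a ha
    simp only [hC, Finset.mem_filter, Finset.mem_univ, true_and] at ha
    obtain ⟨b, hb1, hb2⟩ := Relation.TransGen.tail'_iff.mp ha.2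
    refine ⟨b, ?_, hb2⟩
    have hbj : Relation.TransGen Q b j₀ := (Relation.TransGen.single hb2).trans ha.1
    have hjb : Relation.TransGen Q j₀ b := by
      rcases Relation.reflTransGen_iff_eq_or_transGen.mp hb1 with h | h
      · subst h; exact hcyc
      · exact h
    simp [hC, hbj, hjb]
  have hchild : ∀ a ∈ C, ∃ c ∈ C, Q a c := by
    intro a ha
    simp only [hC, Finset.mem_filter, Finset.mem_univ, true_and] at ha
    obtain ⟨c, hc1, hc2⟩ := Relation.TransGen.head'_iff.mp ha.1
    refine ⟨c, ?_, hc1⟩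
    have hjc : Relation.TransGen Q j₀ c := ha.2.tail hc1
    have hcj : Relation.TransGen Q c j₀ := by
      rcases Relation.reflTransGen_iff_eq_or_transGen.mp hc2 with h | h
      · subst h; exact hcyc
      · exact h
    simp [hC, hcj, hjc]
  -- the parent map on the cycle set
  let τ : {a // a ∈ C} → {a // a ∈ C} :=
    fun a => ⟨(hparent a a.2).choose, (hparent a a.2).choose_spec.1⟩
  have hτ : ∀ a : {x // x ∈ C}, Q ↑(τ a) ↑a := fun a => (hparent a a.2).choose_spec.2
  have hτsurj : Function.Surjective τ := by
    intro i
    obtain ⟨c, hcC, hQic⟩ := hchild ↑i i.2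
    refine ⟨⟨c, hcC⟩, ?_⟩
    have := hfun c _ _ (hτ ⟨c, hcC⟩) hQic
    exact Subtype.ext this
  have hτinj : Function.Injective τ := Finite.injective_iff_surjective.mpr hτsurj
  have huniq : ∀ i, ∀ j ∈ C, ∀ j' ∈ C, Q i j → Q i j' → j = j' := by
    intro i j hj j' hj' h1 h2
    have e1 : (τ ⟨j, hj⟩ : n) = i := hfun j _ _ (hτ ⟨j, hj⟩) h1
    have e2 : (τ ⟨j', hj'⟩ : n) = i := hfun j' _ _ (hτ ⟨j', hj'⟩) h2
    have : τ ⟨j, hj⟩ = τ ⟨j', hj'⟩ := Subtype.ext (e1.trans e2.symm)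
    exact congrArg Subtype.val (hτinj this)
  have hcount : ∀ i, (∑ j ∈ C, P j i) = if i ∈ C then (1 : ℝ) else 0 := by
    intro i
    by_cases hi : i ∈ C
    · obtain ⟨c, hcC, hQic⟩ := hchild i hi
      rw [if_pos hi, Finset.sum_eq_single c]
      · exact hPQ1 _ _ hQic
      · intro j hj hne
        refine hPQ0 _ _ fun hQij => hne (huniq i j hj c hcC hQij hQic)
      · intro h; exact absurd hcC h
    · rw [if_neg hi]
      refine Finset.sum_eq_zero fun j hj => ?_
      refine hPQ0 _ _ fun hQij => ?_
      have e1 : (τ ⟨j, hj⟩ : n) = i := hfun j _ _ (hτ ⟨j, hj⟩) hQij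
      exact hi (e1 ▸ (τ ⟨j, hj⟩).2)
  set v : n → ℝ := fun a => if a ∈ C then 1 else 0 with hv
  have hv0 : v ≠ 0 := by
    intro h
    have := congrFun h j₀
    simp [hv, hj₀] at this
  have hvm : v ᵥ* (1 - P) = 0 := by
    funext i
    have expand : (v ᵥ* (1 - P)) i = (∑ j, v j * (1 : Matrix n n ℝ) j i) - ∑ j, v j * P j i := by
      simp [Matrix.vecMul, dotProduct, sub_mul, mul_sub, Finset.sum_sub_distrib]
    have h1 : (∑ j, v j * (1 : Matrix n n ℝ) j i) = v i := by
      rw [Finset.sum_eq_single i]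
      · simp
      · intro j _ hne; simp [Matrix.one_apply_ne hne]
      · intro h; exact absurd (Finset.mem_univ i) h
    have h2 : (∑ j, v j * P j i) = ∑ j ∈ C, P j i := by
      have hterm : ∀ j, v j * P j i = if j ∈ C then P j i else 0 := by
        intro j; by_cases h : j ∈ C <;> simp [hv, h]
      rw [Finset.sum_congr rfl fun j _ => hterm j, Finset.sum_ite_mem, Finset.univ_inter]
    rw [expand, h1, h2, hcount, hv]
    simp
  exact Matrix.exists_vecMul_eq_zero_iff.mp ⟨v, hv0, hvm⟩

open scoped Classical in
/-- **Weighted matrix tree theorem.** For a directed graph with positive edge weights,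
`det (L_{1,w}^r)` equals the sum, over all outgoing directed spanning trees rooted at
`v_r`, of the product of the weights of the edges of the tree. -/
theorem weighted_tutte_outgoing (p q : ℕ) (src tgt : Fin q → Fin p)
    (hloop : ∀ k, src k ≠ tgt k)
    (hsimple : Function.Injective fun k => (src k, tgt k))
    (w : Fin q → ℝ) (hw : ∀ k, 0 < w k) (r : Fin p) :
    ((Dinw tgt w - Avw src tgt w).submatrix
        (fun i : {i : Fin p // i ≠ r} => i.val)
        (fun i : {i : Fin p // i ≠ r} => i.val)).det =
      ∑ S : Finset (Fin q), if IsOutTree src tgt r S then ∏ k ∈ S, w k else 0 := by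
  classical
  -- abbreviations
  set V := {i : Fin p // i ≠ r} with hV
  let g : V → Fin q → (V → ℝ) := fun j k i =>
    if tgt k = ↑j then w k * ((if (↑i : Fin p) = ↑j then 1 else 0)
      - (if src k = ↑i then 1 else 0)) else 0
  -- Step 1: the transposed reduced Laplacian has rows which are sums over edges
  have hAT : ((Dinw tgt w - Avw src tgt w).submatrix
        (fun i : V => i.val) (fun i : V => i.val))ᵀ
      = Matrix.of (fun (j i : V) => ∑ k, g j k i) := by
    ext j i
    have hterm : ∀ k : Fin q, g j k i
        = (if (↑i : Fin p) = ↑j then (if tgt k = ↑i then w k else 0) else 0)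
          - (if src k = ↑i ∧ tgt k = ↑j then w k else 0) := by
      intro k
      by_cases h1 : tgt k = ↑j <;> by_cases h2 : src k = ↑i <;>
        by_cases h3 : (↑i : Fin p) = ↑j <;>
        simp [g, h1, h2, h3, mul_sub, sub_eq_iff_eq_add]
    have hsum : ∑ k, g j k i
        = (if (↑i : Fin p) = ↑j then ∑ k, (if tgt k = ↑i then w k else 0) else 0)
          - ∑ k, (if src k = ↑i ∧ tgt k = ↑j then w k else 0) := by
      rw [Finset.sum_congr rfl fun k _ => hterm k, Finset.sum_sub_distrib]
      congr 1
      by_cases h3 : (↑i : Fin p) = ↑j <;> simp [h3]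
    simp only [Matrix.transpose_apply, Matrix.submatrix_apply, Matrix.sub_apply,
      Matrix.of_apply, hsum, Dinw, Avw, Matrix.diagonal_apply]
  -- Step 2: expand the determinant by multilinearity in the rows
  have hdet : (Matrix.of fun (j i : V) => ∑ k, g j k i).det
      = ∑ f : V → Fin q, (Matrix.of fun (j i : V) => g j (f j) i).det := by
    have e1 : (Matrix.of fun (j i : V) => ∑ k, g j k i)
        = Matrix.of (fun j : V => ∑ k, g j k) := by
      ext j i; simp [Finset.sum_apply]
    rw [e1]
    exact (Matrix.detRowAlternating (R := ℝ) (n := V)).toMultilinearMap.map_sum (g := g)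
  -- Step 3: evaluate each term of the expansion
  have key : ∀ f : V → Fin q, (Matrix.of fun (j i : V) => g j (f j) i).det
      = if ((∀ j : V, tgt (f j) = ↑j)
            ∧ IsOutTree src tgt r (Finset.image f Finset.univ))
        then ∏ k ∈ Finset.image f Finset.univ, w k else 0 := by
    intro f
    by_cases hgood : ∀ j : V, tgt (f j) = ↑j
    swap
    · push_neg at hgood
      obtain ⟨j, hj⟩ := hgood
      rw [Matrix.det_eq_zero_of_row_eq_zero j (fun i => by simp [g, hj]),
        if_neg (fun h => hj (h.1 j))]
    -- good case
    have hinj : Function.Injective f := by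
      intro a b hab
      have := (hgood a).symm.trans (hab ▸ hgood b)
      exact Subtype.ext this
    set S := Finset.image f Finset.univ with hS
    set Q : V → V → Prop := fun a b => src (f b) = ↑a with hQ
    set P : Matrix V V ℝ := Matrix.of fun (j i : V) => if src (f j) = ↑i then (1:ℝ) else 0
      with hP
    have hfact : (Matrix.of fun (j i : V) => g j (f j) i).det
        = (∏ j : V, w (f j)) * (1 - P).det := by
      rw [← Matrix.det_mul_column]
      congr 1
      ext j i
      simp only [Matrix.of_apply, g, if_pos (hgood j)]
      have hsub : (1 - P) j i
          = (if (↑i : Fin p) = ↑j then 1 else 0) - (if src (f j) = ↑i then 1 else 0) := by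
        rcases eq_or_ne j i with rfl | hji
        · simp [hP, Matrix.one_apply]
        · have h2 : (↑i : Fin p) ≠ ↑j := fun h => hji (Subtype.ext h.symm)
          simp [hP, Matrix.one_apply_ne hji, h2]
      rw [hsub]
    -- relation translation
    have hstep' : ∀ a b, (∃ k ∈ S, src k = a ∧ tgt k = b)
        → ∃ hb : b ≠ r, src (f ⟨b, hb⟩) = a := by
      rintro a b ⟨k, hkS, hksrc, hktgt⟩
      obtain ⟨j, -, rfl⟩ := Finset.mem_image.mp hkS
      have hbj : b = ↑j := by rw [← hktgt, hgood j]
      have hb : b ≠ r := by rw [hbj]; exact j.2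
      refine ⟨hb, ?_⟩
      have : (⟨b, hb⟩ : V) = j := Subtype.ext hbj
      rw [this]; exact hksrc
    have hup : ∀ a b : V, Relation.TransGen Q a b →
        Relation.TransGen (fun x y => ∃ k ∈ S, src k = x ∧ tgt k = y) (↑a) (↑b) := by
      intro a b h
      refine Relation.TransGen.lift Subtype.val ?_ a b h
      intro x y hxy
      exact ⟨f y, Finset.mem_image_of_mem f (Finset.mem_univ y), hxy, hgood y⟩
    have hdown : ∀ a b, Relation.TransGen (fun x y => ∃ k ∈ S, src k = x ∧ tgt k = y) a b →
        ∀ ha : a ≠ r, ∃ hb : b ≠ r, Relation.TransGen Q ⟨a, ha⟩ ⟨b, hb⟩ := by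
      intro a b h
      induction h with
      | single hstep =>
        intro ha
        obtain ⟨hb, hsrc⟩ := hstep' _ _ hstep
        exact ⟨hb, Relation.TransGen.single hsrc⟩
      | tail hab hstep ih =>
        intro ha
        obtain ⟨hb, htg⟩ := ih ha
        obtain ⟨hc, hsrc⟩ := hstep' _ _ hstep
        refine ⟨hc, htg.tail ?_⟩
        exact hsrc
    have hcyc_iff : (∃ a : V, Relation.TransGen Q a a) ↔
        (∃ i, Relation.TransGen (fun x y => ∃ k ∈ S, src k = x ∧ tgt k = y) i i) := by
      constructor
      · rintro ⟨a, ha⟩; exact ⟨↑a, hup a a ha⟩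
      · rintro ⟨i, hi⟩
        obtain ⟨c, -, hci⟩ := Relation.TransGen.tail'_iff.mp hi
        obtain ⟨hir, -⟩ := hstep' _ _ hci
        obtain ⟨hir2, htg⟩ := hdown i i hi hir
        exact ⟨⟨i, hir⟩, htg⟩
    have htree : IsOutTree src tgt r S ↔ ¬ ∃ a : V, Relation.TransGen Q a a := by
      constructor
      · rintro ⟨-, -, h3⟩ ⟨a, ha⟩
        exact h3 ↑a (hup a a ha)
      · intro hnc
        refine ⟨?_, ?_, ?_⟩
        · intro i hi
          refine ⟨f ⟨i, hi⟩, ⟨Finset.mem_image_of_mem f (Finset.mem_univ _), hgood _⟩, ?_⟩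
          rintro k ⟨hkS, hkt⟩
          obtain ⟨j, -, rfl⟩ := Finset.mem_image.mp hkS
          have : j = (⟨i, hi⟩ : V) := Subtype.ext (by rw [← hgood j]; exact hkt)
          rw [this]
        · intro k hk
          obtain ⟨j, -, rfl⟩ := Finset.mem_image.mp hk
          rw [hgood j]; exact j.2
        · intro i hi
          exact hnc (hcyc_iff.mpr ⟨i, hi⟩)
    by_cases hcyc : ∃ a : V, Relation.TransGen Q a a
    · obtain ⟨a, ha⟩ := hcyc
      rw [hfact, aux_det_one_sub_eq_zero P Q
        (fun j i hQij => by simp only [hP, hQ, Matrix.of_apply] at hQij ⊢; rw [if_pos hQij])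
        (fun j i hQij => by simp only [hP, hQ, Matrix.of_apply] at hQij ⊢; rw [if_neg hQij])
        (fun j i i' h h' => Subtype.ext (h.symm.trans h'))
        ha, mul_zero, if_neg]
      intro hcontra
      exact (htree.mp hcontra.2) ⟨a, ha⟩
    · rw [hfact, aux_det_one_sub_eq_one P Q
        (fun j i hne => by
          simp only [hP, Matrix.of_apply] at hne
          by_contra hq
          simp only [hQ] at hq
          exact hne (if_neg hq))
        (fun a => fun hc => hcyc ⟨a, hc⟩), mul_one,
        if_pos ⟨hgood, htree.mpr hcyc⟩]
      exact (Finset.prod_image fun a _ b _ hab => hinj hab).symm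
  -- Step 4: assemble
  rw [← Matrix.det_transpose, hAT, hdet]
  rw [Finset.sum_congr rfl fun f _ => key f]
  rw [← Finset.sum_filter, ← Finset.sum_filter]
  refine Finset.sum_bij (fun f _ => Finset.image f Finset.univ) ?_ ?_ ?_ ?_
  · intro f hf
    simp only [Finset.mem_filter, Finset.mem_univ, true_and] at hf ⊢
    exact hf.2
  · intro f hf f' hf' h
    simp only [Finset.mem_filter, Finset.mem_univ, true_and] at hf hf'
    replace h : Finset.image f Finset.univ = Finset.image f' Finset.univ := h
    funext j
    have h1 : f j ∈ Finset.image f' Finset.univ := by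
      rw [← h]; exact Finset.mem_image_of_mem f (Finset.mem_univ j)
    obtain ⟨j', -, hj'⟩ := Finset.mem_image.mp h1
    have : j' = j := Subtype.ext (by rw [← hf'.1 j', hj', hf.1 j])
    rw [← hj', this]
  · intro S hS
    simp only [Finset.mem_filter, Finset.mem_univ, true_and] at hS
    have hex : ∀ j : V, ∃ k, (k ∈ S ∧ tgt k = ↑j) ∧ ∀ y, (y ∈ S ∧ tgt y = ↑j) → y = k :=
      fun j => hS.1 ↑j j.2
    let f : V → Fin q := fun j => (hex j).choose
    have hfS : ∀ j, f j ∈ S := fun j => (hex j).choose_spec.1.1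
    have hft : ∀ j, tgt (f j) = ↑j := fun j => (hex j).choose_spec.1.2
    have himg : Finset.image f Finset.univ = S := by
      apply Finset.ext
      intro k
      constructor
      · intro hk
        obtain ⟨j, -, rfl⟩ := Finset.mem_image.mp hk
        exact hfS j
      · intro hk
        have hkr : tgt k ≠ r := hS.2.1 k hk
        have := (hex ⟨tgt k, hkr⟩).choose_spec.2 k ⟨hk, rfl⟩
        rw [Finset.mem_image]
        exact ⟨⟨tgt k, hkr⟩, Finset.mem_univ _, this.symm⟩
    refine ⟨f, ?_, himg⟩
    simp only [Finset.mem_filter, Finset.mem_univ, true_and]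
    exact ⟨hft, himg ▸ hS⟩
  · intro f hf
    rfl
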